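/- (Lemma 1.) Fix K, M ∈ ℕ and d : Fin K → ℕ; for each k let F̄ₖ ∈ ℂ^{M×d_k}, Ḡₖ ∈ ℂ^{M×d_k}, and for each ordered pair (l,k) with l ≠ k let H̄_{lk} ∈ ℂ^{d_k×d_l}. Define IL(r) = Σ_{l≠k} ‖H̄_{lk} + F̄ₖᴴ diag(r) Ḡₗ‖_F² and Σ = Σ_{l≠k} (F̄ₖF̄ₖᴴ) ⊙ (ḠₗḠₗᴴ)*. Suppose r₀ ∈ ℂ^M satisfies IL(r₀) = 0, let u ∈ ℂ^M lie in the column space of Σ (i.e., u = Σ.mulVec v for some v), and set α = star(u) ⬝ᵥ r₀. If there exists r ∈ ℂ^M with |r_m| = 1 for all m and IL(r) = 0, then α lies in the annulus max(2·max_m |u_m| − Σ_m |u_m|, 0) ≤ |α| ≤ Σ_m |u_m|. -/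

import Mathlib

open Matrix

lemma sum_zero_of_nonneg {ι : Type*} [Fintype ι] {f : ι → ℝ} (h0 : ∀ i, 0 ≤ f i)
    (h : ∑ i, f i = 0) : ∀ i, f i = 0 := fun i =>
  (Finset.sum_eq_zero_iff_of_nonneg (fun i _ => h0 i)).mp h i (Finset.mem_univ i)

lemma pair_zero {M dk dl : ℕ} (F : Matrix (Fin M) (Fin dk) ℂ)
    (G : Matrix (Fin M) (Fin dl) ℂ) (x : Fin M → ℂ)
    (h : ∀ i j, (Fᴴ * Matrix.diagonal x * G) i j = 0) (n : Fin M) :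
    ∑ m, (starRingEnd ℂ) ((F * Fᴴ) m n * (starRingEnd ℂ) ((G * Gᴴ) m n)) * x m = 0 := by
  have hE : ∀ i j, (Fᴴ * Matrix.diagonal x * G) i j = ∑ m, star (F m i) * x m * G m j := by
    intro i j
    rw [Matrix.mul_apply]
    refine Finset.sum_congr rfl fun m _ => ?_
    rw [Matrix.mul_diagonal, Matrix.conjTranspose_apply]
  have hFF : ∀ m, (starRingEnd ℂ) ((F * Fᴴ) m n) = ∑ i, star (F m i) * F n i := by
    intro m
    rw [Matrix.mul_apply, map_sum]
    refine Finset.sum_congr rfl fun i _ => ?_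
    simp only [starRingEnd_apply, Matrix.conjTranspose_apply, star_mul', star_star]
  have hGG : ∀ m, (G * Gᴴ) m n = ∑ j, G m j * star (G n j) := by
    intro m
    rw [Matrix.mul_apply]
    simp only [Matrix.conjTranspose_apply]
  calc ∑ m, (starRingEnd ℂ) ((F * Fᴴ) m n * (starRingEnd ℂ) ((G * Gᴴ) m n)) * x m
      = ∑ m, ∑ i, ∑ j, star (F m i) * F n i * (G m j * star (G n j)) * x m := by
        refine Finset.sum_congr rfl fun m _ => ?_
        rw [_root_.map_mul, Complex.conj_conj, hFF m, hGG m, Finset.sum_mul_sum]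
        simp only [Finset.sum_mul]
    _ = ∑ i, ∑ j, ∑ m, star (F m i) * F n i * (G m j * star (G n j)) * x m := by
        rw [Finset.sum_comm]
        exact Finset.sum_congr rfl fun i _ => Finset.sum_comm
    _ = ∑ i, ∑ j, F n i * star (G n j) * ((Fᴴ * Matrix.diagonal x * G) i j) := by
        refine Finset.sum_congr rfl fun i _ => Finset.sum_congr rfl fun j _ => ?_
        rw [hE i j, Finset.mul_sum]
        refine Finset.sum_congr rfl fun m _ => ?_
        ring
    _ = 0 := by simp [h]

lemma IL_zero_entry {K M : ℕ} {d : Fin K → ℕ}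
    (F : (k : Fin K) → Matrix (Fin M) (Fin (d k)) ℂ)
    (G : (k : Fin K) → Matrix (Fin M) (Fin (d k)) ℂ)
    (H : (l k : Fin K) → Matrix (Fin (d k)) (Fin (d l)) ℂ)
    (w : Fin M → ℂ)
    (hw : (∑ l, ∑ k, if l ≠ k then
      ∑ i, ∑ j, ‖(H l k + (F k)ᴴ * Matrix.diagonal w * G l) i j‖ ^ 2 else 0 : ℝ) = 0) :
    ∀ l k, l ≠ k → ∀ i j, (H l k + (F k)ᴴ * Matrix.diagonal w * G l) i j = 0 := by
  intro l k hlk i j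
  have hnn : ∀ l k : Fin K, (0:ℝ) ≤ if l ≠ k then
      ∑ i, ∑ j, ‖(H l k + (F k)ᴴ * Matrix.diagonal w * G l) i j‖ ^ 2 else 0 := by
    intro l k
    split
    · exact Finset.sum_nonneg fun i _ => Finset.sum_nonneg fun j _ => by positivity
    · exact le_rfl
  have h1 := sum_zero_of_nonneg (fun l => Finset.sum_nonneg fun k _ => hnn l k) hw l
  have h2 := sum_zero_of_nonneg (fun k => hnn l k) h1 k
  rw [if_pos hlk] at h2
  have h3 := sum_zero_of_nonneg
    (fun i => Finset.sum_nonneg fun j _ => by positivity) h2 i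
  have h4 := sum_zero_of_nonneg (fun j => by positivity) h3 j
  have : ‖(H l k + (F k)ᴴ * Matrix.diagonal w * G l) i j‖ = 0 := by
    nlinarith [norm_nonneg ((H l k + (F k)ᴴ * Matrix.diagonal w * G l) i j)]
  exact norm_eq_zero.mp this

theorem lemma1_annulus_necessary (K M : ℕ) (d : Fin K → ℕ)
    (F : (k : Fin K) → Matrix (Fin M) (Fin (d k)) ℂ)
    (G : (k : Fin K) → Matrix (Fin M) (Fin (d k)) ℂ)
    (H : (l k : Fin K) → Matrix (Fin (d k)) (Fin (d l)) ℂ)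
    (IL : (Fin M → ℂ) → ℝ)
    (hIL : ∀ r, IL r = ∑ l, ∑ k, if l ≠ k then
      ∑ i, ∑ j, ‖(H l k + (F k)ᴴ * Matrix.diagonal r * G l) i j‖ ^ 2 else 0)
    (Sig : Matrix (Fin M) (Fin M) ℂ)
    (hSig : Sig = ∑ l, ∑ k, if l ≠ k then
      Matrix.hadamard (F k * (F k)ᴴ) ((G l * (G l)ᴴ).map (starRingEnd ℂ)) else 0)
    (r₀ : Fin M → ℂ) (hr₀ : IL r₀ = 0)
    (u v : Fin M → ℂ) (hu : u = Sig.mulVec v)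
    (α : ℂ) (hα : α = star u ⬝ᵥ r₀)
    (hfeas : ∃ r : Fin M → ℂ, (∀ m, ‖r m‖ = 1) ∧ IL r = 0) :
    max (2 * (⨆ m, ‖u m‖) - ∑ m, ‖u m‖) 0 ≤ ‖α‖ ∧
      ‖α‖ ≤ ∑ m, ‖u m‖ := by
  obtain ⟨r, hrmod, hr⟩ := hfeas
  rw [hIL] at hr₀ hr
  have h0 := IL_zero_entry F G H r₀ hr₀
  have h1 := IL_zero_entry F G H r hr
  set x : Fin M → ℂ := r₀ - r with hx
  -- entries of Fᴴ diag(x) G vanish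
  have hAx : ∀ l k, l ≠ k → ∀ i j, ((F k)ᴴ * Matrix.diagonal x * G l) i j = 0 := by
    intro l k hlk i j
    have hM : (F k)ᴴ * Matrix.diagonal x * G l =
        (H l k + (F k)ᴴ * Matrix.diagonal r₀ * G l)
          - (H l k + (F k)ᴴ * Matrix.diagonal r * G l) := by
      have hd : Matrix.diagonal (r₀ - r) = Matrix.diagonal r₀ - Matrix.diagonal r := by
        ext a b
        by_cases hab : a = b <;> simp [Matrix.diagonal_apply, hab]
      rw [hx, hd, Matrix.mul_sub, Matrix.sub_mul]
      abel
    rw [hM, Matrix.sub_apply, h0 l k hlk i j, h1 l k hlk i j, sub_zero]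
  -- Sigᴴ.mulVec x = 0
  have hSigx : ∀ n, ∑ m, (starRingEnd ℂ) (Sig m n) * x m = 0 := by
    intro n
    have expand : ∀ m, (starRingEnd ℂ) (Sig m n) * x m
        = ∑ l, ∑ k, if l ≠ k then
            (starRingEnd ℂ) ((F k * (F k)ᴴ) m n
              * (starRingEnd ℂ) ((G l * (G l)ᴴ) m n)) * x m else 0 := by
      intro m
      rw [hSig]
      simp only [Matrix.sum_apply, map_sum, Finset.sum_mul]
      refine Finset.sum_congr rfl fun l _ => Finset.sum_congr rfl fun k _ => ?_
      by_cases hlk : l ≠ k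
      · simp [hlk, Matrix.hadamard, Matrix.map_apply]
      · simp [hlk]
    rw [Finset.sum_congr rfl fun m _ => expand m, Finset.sum_comm]
    refine Finset.sum_eq_zero fun l _ => ?_
    rw [Finset.sum_comm]
    refine Finset.sum_eq_zero fun k _ => ?_
    by_cases hlk : l ≠ k
    · simp only [if_pos hlk]
      exact pair_zero (F k) (G l) x (fun i j => hAx l k hlk i j) n
    · simp [hlk]
  have hmv : Sigᴴ.mulVec x = 0 := by
    funext n
    have e : Sigᴴ.mulVec x n = ∑ m, (starRingEnd ℂ) (Sig m n) * x m := by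
      simp only [Matrix.mulVec, dotProduct, Matrix.conjTranspose_apply,
        starRingEnd_apply]
    rw [e, hSigx n, Pi.zero_apply]
  have hdot : star u ⬝ᵥ x = 0 := by
    rw [hu, Matrix.star_mulVec, ← Matrix.dotProduct_mulVec, hmv, dotProduct_zero]
  have hαr : α = star u ⬝ᵥ r := by
    have : star u ⬝ᵥ r₀ - star u ⬝ᵥ r = 0 := by
      rw [← dotProduct_sub]; exact hdot
    rw [hα]
    linear_combination this
  -- expand as sum
  have hαsum : α = ∑ m, star (u m) * r m := by
    rw [hαr]; rfl
  have habs : ∀ m, ‖star (u m) * r m‖ = ‖u m‖ := by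
    intro m
    rw [norm_mul, hrmod m, mul_one]
    exact norm_star (u m)
  have hupper : ‖α‖ ≤ ∑ m, ‖u m‖ := by
    rw [hαsum]
    calc ‖∑ m, star (u m) * r m‖ ≤ ∑ m, ‖star (u m) * r m‖ := by
          exact
            norm_sum_le Finset.univ (fun m => star (u m) * r m)
      _ = ∑ m, ‖u m‖ := Finset.sum_congr rfl fun m _ => habs m
  refine ⟨?_, hupper⟩
  rcases Nat.eq_zero_or_pos M with hM | hM
  · subst hM
    simp only [Real.iSup_of_isEmpty, Finset.univ_eq_empty, Finset.sum_empty,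
      mul_zero, sub_zero, max_self]
    exact norm_nonneg _
  · have : Nonempty (Fin M) := ⟨⟨0, hM⟩⟩
    obtain ⟨m₀, hm₀⟩ := Finite.exists_max (fun m => ‖u m‖)
    have hsup : (⨆ m, ‖u m‖) ≤ ‖u m₀‖ := ciSup_le hm₀
    refine max_le ?_ (norm_nonneg _)
    have hS : ∑ m, ‖u m‖
        = ‖u m₀‖ + ∑ m ∈ Finset.univ.erase m₀, ‖u m‖ :=
      (Finset.add_sum_erase _ _ (Finset.mem_univ m₀)).symm
    have hαsplit : α = star (u m₀) * r m₀ + ∑ m ∈ Finset.univ.erase m₀, star (u m) * r m := by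
      rw [hαsum]
      exact (Finset.add_sum_erase _ _ (Finset.mem_univ m₀)).symm
    have htail : ‖∑ m ∈ Finset.univ.erase m₀, star (u m) * r m‖
        ≤ ∑ m ∈ Finset.univ.erase m₀, ‖u m‖ := by
      calc ‖∑ m ∈ Finset.univ.erase m₀, star (u m) * r m‖
          ≤ ∑ m ∈ Finset.univ.erase m₀, ‖star (u m) * r m‖ := by
            exact
              norm_sum_le (Finset.univ.erase m₀) (fun m => star (u m) * r m)
        _ = _ := Finset.sum_congr rfl fun m _ => habs m
    have hkey : ‖u m₀‖ ≤ ‖α‖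
        + ∑ m ∈ Finset.univ.erase m₀, ‖u m‖ := by
      have : ‖u m₀‖
          = ‖α - ∑ m ∈ Finset.univ.erase m₀, star (u m) * r m‖ := by
        rw [hαsplit]
        rw [add_sub_cancel_right]
        exact (habs m₀).symm
      rw [this]
      calc ‖α - ∑ m ∈ Finset.univ.erase m₀, star (u m) * r m‖
          ≤ ‖α‖ + ‖∑ m ∈ Finset.univ.erase m₀, star (u m) * r m‖ := by
            exact
              norm_sub_le α (∑ m ∈ Finset.univ.erase m₀, star (u m) * r m)
        _ ≤ _ := by linarith
    linarith [hm₀]
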